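/- Let ρ be a two-qubit Schmidt-correlated state with coefficients c1, c2, c4 and let δ be any real number. Then the state ρ' = c4|00⟩⟨00| + c2·e^{iδ}|00⟩⟨11| + conj(c2)·e^{-iδ}|11⟩⟨00| + c1|11⟩⟨11| is LU equivalent to ρ, i.e., there exist 2×2 unitaries U1, U2 with ρ' = (U1⊗U2) ρ (U1⊗U2)†. -/

import Mathlib

open Matrix Kronecker

/-- The two-qubit Schmidt-correlated state
`ρ = c1|00⟩⟨00| + c2|00⟩⟨11| + conj(c2)|11⟩⟨00| + c4|11⟩⟨11|`. -/
noncomputable def scState (c1 c4 : ℝ) (c2 : ℂ) :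
    Matrix (Fin 2 × Fin 2) (Fin 2 × Fin 2) ℂ :=
  Matrix.of fun p q =>
    if p = (0, 0) ∧ q = (0, 0) then (c1 : ℂ)
    else if p = (0, 0) ∧ q = (1, 1) then c2
    else if p = (1, 1) ∧ q = (0, 0) then (starRingEnd ℂ) c2
    else if p = (1, 1) ∧ q = (1, 1) then (c4 : ℂ)
    else 0

/-- Swapping `c1` with `c4` and multiplying `c2` by a phase `e^{iδ}` yields a
local unitary equivalent SC state. -/
theorem sc_swap_phase_LU_equiv (c1 c4 : ℝ) (c2 : ℂ) (δ : ℝ)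
    (hc1 : 0 ≤ c1) (hc4 : 0 ≤ c4) (hsum : c1 + c4 = 1)
    (hc2 : ‖c2‖ ^ 2 ≤ c1 * c4) :
    ∃ U1 U2 : Matrix (Fin 2) (Fin 2) ℂ,
      U1 ∈ Matrix.unitaryGroup (Fin 2) ℂ ∧ U2 ∈ Matrix.unitaryGroup (Fin 2) ℂ ∧
      scState c4 c1 (c2 * Complex.exp (δ * Complex.I)) =
        (U1 ⊗ₖ U2) * scState c1 c4 c2 * (U1 ⊗ₖ U2)ᴴ := by
  set e : ℂ := Complex.exp (δ * Complex.I) with he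
  have habe : ‖e‖ = 1 := Complex.norm_exp_ofReal_mul_I δ
  set w : ℂ := if c2 = 0 then e else c2 * e / (starRingEnd ℂ) c2 with hwdef
  have habw : ‖w‖ = 1 := by
    by_cases h : c2 = 0
    · simp [hwdef, h, habe]
    · have hab : ‖c2‖ ≠ 0 := norm_ne_zero_iff.mpr h
      simp only [hwdef, if_neg h, norm_div, norm_mul, Complex.norm_conj, habe, mul_one]
      exact div_self hab
  have hww : w * (starRingEnd ℂ) w = 1 := by
    rw [Complex.mul_conj, ← Complex.sq_norm, habw]; norm_num
  have hww' : (starRingEnd ℂ) w * w = 1 := by rw [mul_comm]; exact hww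
  have hw2 : w * (starRingEnd ℂ) c2 = c2 * e := by
    by_cases h : c2 = 0
    · simp [hwdef, h]
    · have h' : (starRingEnd ℂ) c2 ≠ 0 := star_ne_zero.mpr h
      rw [hwdef, if_neg h, div_mul_cancel₀ _ h']
  have hw3 : c2 * (starRingEnd ℂ) w = (starRingEnd ℂ) (c2 * e) := by
    have := congrArg (starRingEnd ℂ) hw2
    simpa [mul_comm] using this
  refine ⟨!![0, 1; 1, 0], !![0, w; 1, 0], ?_, ?_, ?_⟩
  · constructor
    · ext i j; fin_cases i <;> fin_cases j <;>
        simp [Matrix.mul_apply, Fin.sum_univ_two, Matrix.one_apply]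
    · ext i j; fin_cases i <;> fin_cases j <;>
        simp [Matrix.mul_apply, Fin.sum_univ_two, Matrix.one_apply]
  · constructor
    · ext i j; fin_cases i <;> fin_cases j <;>
        simp [Matrix.mul_apply, Fin.sum_univ_two, Matrix.one_apply, hww, hww']
    · ext i j; fin_cases i <;> fin_cases j <;>
        simp [Matrix.mul_apply, Fin.sum_univ_two, Matrix.one_apply, hww, hww']
  · ext p q
    obtain ⟨i, j⟩ := p
    obtain ⟨k, l⟩ := q
    fin_cases i <;> fin_cases j <;> fin_cases k <;> fin_cases l <;>
      simp [scState, Matrix.mul_apply, Fintype.sum_prod_type, Fin.sum_univ_two,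
        kroneckerMap_apply, conjTranspose_apply, Prod.ext_iff, hw3] <;>
      first
        | rfl
        | linear_combination (↑c4 : ℂ) * hww
        | linear_combination (↑c1 : ℂ) * hww
        | linear_combination (↑c4 + ↑c1 : ℂ) * hww
        | linear_combination (↑c1 : ℂ) * hww + hw2
        | linear_combination (↑c4 : ℂ) * hww + hw2
        | linear_combination (↑c1 : ℂ) * hww - hw2
        | linear_combination (↑c4 : ℂ) * hww - hw2
        | linear_combination (-(↑c4 : ℂ)) * hww
        | linear_combination (-(↑c1 : ℂ)) * hww
        | linear_combination hw2
        | linear_combination -hw2
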